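/- Let k be an infinite field and R = k[x,y] with homogeneous maximal ideal 𝔪 = (x,y). Let I be a nonzero proper monomial ideal of R that is full. Then there exists an ordering f₁, …, f_s of the minimal monomial generating set G(I) of I such that deg f₁ ≤ deg f₂ ≤ ⋯ ≤ deg f_s and, for every 1 ≤ j ≤ s−1, the colon ideal (f₁, …, f_j) : f_{j+1} is the principal ideal generated by a single variable (x or y). -/

import Mathlib

open MvPolynomial

noncomputable section

variable {k : Type*} [Field k]

/-- An ideal of a polynomial ring is homogeneous if it contains all homogeneous
components of its elements. -/
def IsHomogeneousIdeal {σ : Type*} (I : Ideal (MvPolynomial σ k)) : Prop :=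
  ∀ p ∈ I, ∀ d : ℕ, MvPolynomial.homogeneousComponent d p ∈ I

/-- The homogeneous maximal ideal `(x, y)` of `k[x,y]`. -/
def maxIdeal (k : Type*) [Field k] : Ideal (MvPolynomial (Fin 2) k) :=
  Ideal.span {X 0, X 1}

/-- A homogeneous ideal `I ⊆ k[x,y]` is full if `(I : z) = (I : 𝔪)` for some
linear form `z`. -/
def IsFull (I : Ideal (MvPolynomial (Fin 2) k)) : Prop :=
  ∃ z : MvPolynomial (Fin 2) k, z ≠ 0 ∧ z.IsHomogeneous 1 ∧
    Submodule.colon I (Ideal.span {z}) = Submodule.colon I (maxIdeal k)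

/-- The order `o(I)` of an ideal: the smallest degree of a nonzero homogeneous
element of `I`. -/
def ordDeg (I : Ideal (MvPolynomial (Fin 2) k)) : ℕ :=
  sInf {d : ℕ | ∃ p ∈ I, p ≠ 0 ∧ MvPolynomial.IsHomogeneous p d}

/-- A monomial ideal: an ideal generated by monomials. -/
def IsMonomialIdeal {σ : Type*} (I : Ideal (MvPolynomial σ k)) : Prop :=
  ∃ A : Set (σ →₀ ℕ), I = Ideal.span ((fun a => MvPolynomial.monomial a (1 : k)) '' A)

/-- The minimal monomial generating set `G(I)` of a monomial ideal: the monic monomials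
of `I` whose exponent vectors are minimal with respect to componentwise order
(equivalently, divisibility). -/
def minimalMonomialGens {σ : Type*} (I : Ideal (MvPolynomial σ k)) :
    Set (MvPolynomial σ k) :=
  (fun a => MvPolynomial.monomial a (1 : k)) ''
    {a : σ →₀ ℕ | MvPolynomial.monomial a (1 : k) ∈ I ∧
      ∀ b : σ →₀ ℕ, MvPolynomial.monomial b (1 : k) ∈ I → b ≤ a → b = a}

noncomputable section LQOAux

namespace LQO

variable {k : Type*} [Field k]

def mk2 (x y : ℕ) : Fin 2 →₀ ℕ := Finsupp.single 0 x + Finsupp.single 1 y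

@[simp] lemma mk2_apply0 (x y : ℕ) : mk2 x y 0 = x := by
  simp [mk2, Finsupp.single_apply]

@[simp] lemma mk2_apply1 (x y : ℕ) : mk2 x y 1 = y := by
  simp [mk2, Finsupp.single_apply]

lemma ext2 {u v : Fin 2 →₀ ℕ} (h0 : u 0 = v 0) (h1 : u 1 = v 1) : u = v := by
  ext i
  fin_cases i <;> assumption

lemma eq_mk2 (u : Fin 2 →₀ ℕ) : u = mk2 (u 0) (u 1) := ext2 (by simp) (by simp)

lemma le2 {u v : Fin 2 →₀ ℕ} : u ≤ v ↔ u 0 ≤ v 0 ∧ u 1 ≤ v 1 := by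
  constructor
  · intro h; exact ⟨h 0, h 1⟩
  · rintro ⟨h0, h1⟩ i; fin_cases i <;> assumption

lemma mk2_le {x y x' y' : ℕ} : mk2 x y ≤ mk2 x' y' ↔ x ≤ x' ∧ y ≤ y' := by
  rw [le2]; simp

lemma mk2_addX (x y : ℕ) : mk2 x y + Finsupp.single 0 1 = mk2 (x + 1) y :=
  ext2 (by simp [Finsupp.single_apply]) (by simp [Finsupp.single_apply])

lemma mk2_addY (x y : ℕ) : mk2 x y + Finsupp.single 1 1 = mk2 x (y + 1) :=
  ext2 (by simp [Finsupp.single_apply]) (by simp [Finsupp.single_apply])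

lemma X0_mul_mono (x y : ℕ) (c : k) :
    X (0 : Fin 2) * monomial (mk2 x y) c = monomial (mk2 (x + 1) y) c := by
  rw [X, monomial_mul, one_mul, ← mk2_addX, add_comm]

lemma X1_mul_mono (x y : ℕ) (c : k) :
    X (1 : Fin 2) * monomial (mk2 x y) c = monomial (mk2 x (y + 1)) c := by
  rw [X, monomial_mul, one_mul, ← mk2_addY, add_comm]

lemma degree2 (u : Fin 2 →₀ ℕ) : u.degree = u 0 + u 1 := by
  rw [Finsupp.degree_apply, Finset.sum_subset (Finset.subset_univ u.support)
    (by intro x _ hx; simpa using Finsupp.notMem_support_iff.mp hx)]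
  exact Fin.sum_univ_two u

/-- The diagonal polynomial used in the fullness obstruction. -/
def diagPoly (α β : k) (u0 v0 N : ℕ) : MvPolynomial (Fin 2) k :=
  ∑ t ∈ Finset.range (N + 1), C ((-β) ^ t * α ^ (N - t)) * monomial (mk2 (u0 - t) (v0 + t)) 1

lemma zmul (α β : k) (x y : ℕ) (c : k) :
    (C α * X 0 + C β * X 1) * monomial (mk2 x y) c =
      C α * monomial (mk2 (x + 1) y) c + C β * monomial (mk2 x (y + 1)) c := by
  rw [add_mul, mul_assoc, mul_assoc, X0_mul_mono, X1_mul_mono]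

lemma diagPoly_succ (α β : k) (u0 v0 N : ℕ) :
    diagPoly α β u0 v0 (N + 1) =
      C α * diagPoly α β u0 v0 N
        + C ((-β) ^ (N + 1)) * monomial (mk2 (u0 - (N + 1)) (v0 + (N + 1))) 1 := by
  rw [diagPoly, Finset.sum_range_succ, Nat.sub_self, pow_zero, mul_one]
  congr 1
  rw [diagPoly, Finset.mul_sum]
  refine Finset.sum_congr rfl fun t ht => ?_
  rw [Finset.mem_range] at ht
  rw [← mul_assoc, ← map_mul]
  congr 2
  rw [← mul_assoc, mul_comm α, mul_assoc]
  congr 1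
  rw [← pow_succ']
  congr 1
  omega

lemma telescope (α β : k) (u0 v0 N : ℕ) (hN : N ≤ u0) :
    (C α * X 0 + C β * X 1) * diagPoly α β u0 v0 N =
      C (α ^ (N + 1)) * monomial (mk2 (u0 + 1) v0) 1
        - C ((-β) ^ (N + 1)) * monomial (mk2 (u0 - N) (v0 + N + 1)) 1 := by
  induction N with
  | zero =>
      have h0 : diagPoly α β u0 v0 0 = monomial (mk2 u0 v0) 1 := by
        simp [diagPoly]
      rw [h0, zmul]
      simp only [zero_add, pow_one, pow_zero, map_neg, Nat.sub_zero, Nat.add_zero]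
      ring
  | succ N ih =>
      have hN' : N ≤ u0 := by omega
      rw [diagPoly_succ, mul_add, ← mul_assoc, mul_comm (C α * X 0 + C β * X 1) (C α),
        mul_assoc, ih hN', ← mul_assoc,
        mul_comm (C α * X 0 + C β * X 1) (C ((-β) ^ (N + 1))), mul_assoc, zmul]
      have e1 : u0 - (N + 1) + 1 = u0 - N := by omega
      rw [e1]
      have e2 : v0 + (N + 1) + 1 = v0 + (N + 1 + 1) := by omega
      rw [e2]
      have e3 : v0 + (N + 1) = v0 + N + 1 := by omega
      rw [e3]
      simp only [map_pow, map_neg]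
      ring


lemma coeff_diagPoly (α β : k) (u0 v0 N t : ℕ) (ht : t ≤ N) :
    coeff (mk2 (u0 - t) (v0 + t)) (diagPoly α β u0 v0 N) = (-β) ^ t * α ^ (N - t) := by
  rw [diagPoly, coeff_sum]
  rw [Finset.sum_eq_single t]
  · rw [coeff_C_mul, coeff_monomial, if_pos rfl, mul_one]
  · intro t' _ hne
    rw [coeff_C_mul, coeff_monomial, if_neg, mul_zero]
    intro h
    have := congrArg (fun u => u 1) h
    simp at this
    omega
  · intro h
    exact absurd (Finset.mem_range.mpr (by omega)) h

lemma X_eq_monomial (i : Fin 2) : (X i : MvPolynomial (Fin 2) k) = monomial (Finsupp.single i 1) 1 := rfl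

lemma coeff_mul_X0 (p : MvPolynomial (Fin 2) k) (x y : ℕ) (hx : 1 ≤ x) :
    coeff (mk2 x y) (p * X 0) = coeff (mk2 (x - 1) y) p := by
  rw [X_eq_monomial, coeff_mul_monomial', if_pos]
  · rw [mul_one]
    congr 1
    refine ext2 ?_ ?_ <;> simp [Finsupp.tsub_apply, Finsupp.single_apply]
  · rw [Finsupp.single_le_iff]
    simpa using hx

lemma single_le2 {i : Fin 2} {u : Fin 2 →₀ ℕ} : Finsupp.single i 1 ≤ u ↔ 1 ≤ u i :=
  Finsupp.single_le_iff

variable (I : Ideal (MvPolynomial (Fin 2) k))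

/-- Exponents of monomials belonging to `I`. -/
def MS : Set (Fin 2 →₀ ℕ) := {e | monomial e (1 : k) ∈ I}

/-- Minimal exponents of monomials of `I`. -/
def GS : Set (Fin 2 →₀ ℕ) :=
  {a | monomial a (1 : k) ∈ I ∧
    ∀ b : Fin 2 →₀ ℕ, monomial b (1 : k) ∈ I → b ≤ a → b = a}

variable {I}

lemma MS_upclosed {e e' : Fin 2 →₀ ℕ} (he : e ∈ MS I) (h : e ≤ e') : e' ∈ MS I := by
  have : monomial e' (1 : k) = monomial (e' - e) 1 * monomial e 1 := by
    rw [monomial_mul, one_mul, tsub_add_cancel_of_le h]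
  have heI : monomial e (1 : k) ∈ I := he
  show monomial e' (1 : k) ∈ I
  rw [this]
  exact Ideal.mul_mem_left _ _ heI

lemma GS_subset_MS : GS I ⊆ MS I := fun _ h => h.1

lemma exists_GS_le {e : Fin 2 →₀ ℕ} (he : e ∈ MS I) : ∃ g ∈ GS I, g ≤ e := by
  generalize hn : e 0 + e 1 = n
  induction n using Nat.strong_induction_on generalizing e with
  | _ n ih =>
    by_cases hmin : ∀ b : Fin 2 →₀ ℕ, monomial b (1 : k) ∈ I → b ≤ e → b = e
    · exact ⟨e, ⟨he, hmin⟩, le_refl e⟩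
    · push_neg at hmin
      obtain ⟨b, hbI, hble, hbne⟩ := hmin
      have hb : b ∈ MS I := hbI
      have hlt : b 0 + b 1 < n := by
        rcases lt_or_eq_of_le (le2.mp hble).1 with h | h
        · have := (le2.mp hble).2; omega
        · rcases lt_or_eq_of_le (le2.mp hble).2 with h' | h'
          · omega
          · exact absurd (ext2 h h') hbne
      obtain ⟨g, hg, hgle⟩ := ih _ hlt hb rfl
      exact ⟨g, hg, hgle.trans hble⟩

lemma span_GS (hmon : ∃ A : Set (Fin 2 →₀ ℕ),
      I = Ideal.span ((fun a => monomial a (1 : k)) '' A)) :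
    I = Ideal.span ((fun a => monomial a (1 : k)) '' GS I) := by
  obtain ⟨A, hA⟩ := hmon
  apply le_antisymm
  · conv_lhs => rw [hA]
    rw [Ideal.span_le]
    rintro _ ⟨a, haA, rfl⟩
    have haM : a ∈ MS I := by
      show monomial a (1:k) ∈ I
      rw [hA]
      exact Ideal.subset_span ⟨a, haA, rfl⟩
    obtain ⟨g, hg, hgle⟩ := exists_GS_le haM
    have : monomial a (1 : k) = monomial (a - g) 1 * monomial g 1 := by
      rw [monomial_mul, one_mul, tsub_add_cancel_of_le hgle]
    show monomial a (1 : k) ∈ _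
    rw [this]
    exact Ideal.mul_mem_left _ _ (Ideal.subset_span ⟨g, hg, rfl⟩)
  · rw [Ideal.span_le]
    rintro _ ⟨a, haG, rfl⟩
    exact haG.1

lemma GS_coord0_inj {u v : Fin 2 →₀ ℕ} (hu : u ∈ GS I) (hv : v ∈ GS I)
    (h : u 0 = v 0) : u = v := by
  rcases le_total (u 1) (v 1) with h1 | h1
  · exact (hv.2 u hu.1 (le2.mpr ⟨le_of_eq h, h1⟩))
  · exact (hu.2 v hv.1 (le2.mpr ⟨le_of_eq h.symm, h1⟩)).symm

lemma GS_finite : (GS I).Finite := by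
  rcases Set.eq_empty_or_nonempty (GS I) with h | ⟨a0, ha0⟩
  · rw [h]; exact Set.finite_empty
  · have hsub : GS I ⊆ {g ∈ GS I | g 0 ≤ a0 0} ∪ {g ∈ GS I | g 1 ≤ a0 1} := by
      intro g hg
      by_cases h0 : g 0 ≤ a0 0
      · exact Or.inl ⟨hg, h0⟩
      · refine Or.inr ⟨hg, ?_⟩
        by_contra h1
        push_neg at h0 h1
        have : a0 ≤ g := le2.mpr ⟨h0.le, h1.le⟩
        have := hg.2 a0 ha0.1 this
        rw [← this] at h0
        omega
    refine Set.Finite.subset (Set.Finite.union ?_ ?_) hsub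
    · have : Set.InjOn (fun g : Fin 2 →₀ ℕ => g 0) {g ∈ GS I | g 0 ≤ a0 0} := by
        intro u hu v hv h
        exact GS_coord0_inj hu.1 hv.1 h
      apply Set.Finite.of_finite_image _ this
      exact (Set.finite_Iic (a0 0)).subset (by rintro _ ⟨g, hg, rfl⟩; exact hg.2)
    · have : Set.InjOn (fun g : Fin 2 →₀ ℕ => g 1) {g ∈ GS I | g 1 ≤ a0 1} := by
        intro u hu v hv h
        rcases le_total (u 0) (v 0) with h0 | h0
        · exact (hv.1.2 u hu.1.1 (le2.mpr ⟨h0, le_of_eq h⟩))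
        · exact (hu.1.2 v hv.1.1 (le2.mpr ⟨h0, le_of_eq h.symm⟩)).symm
      apply Set.Finite.of_finite_image _ this
      exact (Set.finite_Iic (a0 1)).subset (by rintro _ ⟨g, hg, rfl⟩; exact hg.2)


lemma colon_step {s : ℕ} (g : Fin s → (Fin 2 →₀ ℕ)) (T : Set (Fin s)) (t tm : Fin s)
    (i0 : Fin 2) (hmemT : tm ∈ T)
    (hdvd : g tm ≤ g t + Finsupp.single i0 1)
    (hge : ∀ l ∈ T, g t i0 + 1 ≤ g l i0) :
    Submodule.colon (Ideal.span ((fun e => monomial e (1 : k)) '' (g '' T)))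
      (Ideal.span {monomial (g t) (1 : k)}) = Ideal.span {X i0} := by
  classical
  apply le_antisymm
  · intro r hr
    have hrt : r * monomial (g t) 1 ∈
        Ideal.span ((fun e => monomial e (1 : k)) '' (g '' T)) :=
      Ideal.mem_colon_span_singleton.mp hr
    have hXspan : ({X i0} : Set (MvPolynomial (Fin 2) k)) =
        (fun e => monomial e (1 : k)) '' {Finsupp.single i0 1} := by
      rw [Set.image_singleton, X_eq_monomial]
    rw [hXspan, mem_ideal_span_monomial_image]
    intro e he
    refine ⟨Finsupp.single i0 1, rfl, ?_⟩
    have hsupp : e + g t ∈ (r * monomial (g t) 1).support := by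
      rw [mem_support_iff, coeff_mul_monomial', if_pos le_add_self, add_tsub_cancel_right,
        mul_one]
      exact mem_support_iff.mp he
    obtain ⟨si, hsi, hle⟩ := mem_ideal_span_monomial_image.mp hrt _ hsupp
    obtain ⟨l, hlT, rfl⟩ := hsi
    have h1 : g l i0 ≤ e i0 + g t i0 := by
      have := hle i0
      simpa using this
    have h2 := hge l hlT
    rw [single_le2]
    omega
  · rw [Ideal.span_le, Set.singleton_subset_iff, SetLike.mem_coe]
    rw [Ideal.mem_colon_span_singleton]
    have : X i0 * monomial (g t) 1 = monomial (g t + Finsupp.single i0 1) (1 : k) := by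
      rw [X_eq_monomial, monomial_mul, one_mul, add_comm]
    rw [this, mem_ideal_span_monomial_image]
    intro e he
    rw [support_monomial, if_neg one_ne_zero, Finset.mem_singleton] at he
    subst he
    exact ⟨g tm, ⟨tm, hmemT, rfl⟩, hdvd⟩

lemma homog1_decomp {z : MvPolynomial (Fin 2) k} (hz : z.IsHomogeneous 1) :
    z = C (coeff (Finsupp.single 0 1) z) * X 0 + C (coeff (Finsupp.single 1 1) z) * X 1 := by
  have hs01 : (Finsupp.single (0 : Fin 2) 1 : Fin 2 →₀ ℕ) ≠ Finsupp.single 1 1 := by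
    intro h
    have := congrArg (fun u => u 0) h
    simp [Finsupp.single_apply] at this
  ext e
  rw [coeff_add, coeff_C_mul, coeff_C_mul, coeff_X', coeff_X']
  by_cases h0 : e = Finsupp.single 0 1
  · subst h0
    rw [if_pos rfl, if_neg (by exact fun h => hs01 h.symm)]
    ring
  · by_cases h1 : e = Finsupp.single 1 1
    · subst h1
      rw [if_pos rfl, if_neg (by exact fun h => hs01 h)]
      ring
    · rw [if_neg (by exact fun h => h0 h.symm), if_neg (by exact fun h => h1 h.symm)]
      have hdeg : e.degree ≠ 1 := by
        intro hd
        rw [degree2] at hd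
        rcases Nat.eq_zero_or_pos (e 0) with h | h
        · apply h1
          refine ext2 ?_ ?_ <;> simp [Finsupp.single_apply] <;> omega
        · apply h0
          refine ext2 ?_ ?_ <;> simp [Finsupp.single_apply] <;> omega
      rw [hz.coeff_eq_zero hdeg]
      ring

lemma pair_of_full {I : Ideal (MvPolynomial (Fin 2) k)} {s : ℕ}
    (g : Fin s → (Fin 2 →₀ ℕ)) (a b : ℕ → ℕ)
    (hga : ∀ l : Fin s, g l 0 = a l.val) (hgb : ∀ l : Fin s, g l 1 = b l.val)
    (haA : ∀ m n : ℕ, m < n → n < s → a n < a m)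
    (hbM : ∀ m n : ℕ, m < n → n < s → b m < b n)
    (hgI : ∀ l : Fin s, monomial (g l) (1 : k) ∈ I)
    (memI : ∀ p : MvPolynomial (Fin 2) k, p ∈ I → ∀ e ∈ p.support, ∃ l : Fin s, g l ≤ e)
    (hfull : IsFull I) :
    ∀ i j : ℕ, i ≤ j → j + 1 < s → b (i + 1) = b i + 1 ∨ a j = a (j + 1) + 1 := by
  by_contra hcon
  push_neg at hcon
  obtain ⟨z, hz0, hz1, hzc⟩ := hfull
  have hcz : ∀ p : MvPolynomial (Fin 2) k, p * z ∈ I → p * X 0 ∈ I ∧ p * X 1 ∈ I := by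
    intro p hp
    have h1 : p ∈ Submodule.colon I (Ideal.span {z}) := Ideal.mem_colon_span_singleton.mpr hp
    rw [hzc] at h1
    have h2 := Submodule.mem_colon.mp h1
    constructor
    · have := h2 (X 0) (Ideal.subset_span (Set.mem_insert _ _))
      simpa [smul_eq_mul] using this
    · have := h2 (X 1) (Ideal.subset_span (Set.mem_insert_of_mem _ rfl))
      simpa [smul_eq_mul] using this
  -- pick a violating pair with minimal gap
  have hVne : (({d | ∃ i j : ℕ, i ≤ j ∧ j + 1 < s ∧ b (i + 1) ≠ b i + 1 ∧
      a j ≠ a (j + 1) + 1 ∧ j - i = d}) : Set ℕ).Nonempty := by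
    obtain ⟨i, j, h1, h2, h3, h4⟩ := hcon
    exact ⟨j - i, i, j, h1, h2, h3, h4, rfl⟩
  obtain ⟨i, j, hij, hj1, hL, hR, hd⟩ := Nat.sInf_mem hVne
  have hmin : ∀ i' j' : ℕ, i' ≤ j' → j' + 1 < s → b (i' + 1) ≠ b i' + 1 →
      a j' ≠ a (j' + 1) + 1 → ¬ (j' - i' < j - i) := by
    intro i' j' h1 h2 h3 h4 hlt
    rw [hd] at hlt
    exact Nat.notMem_of_lt_sInf hlt ⟨i', j', h1, h2, h3, h4, rfl⟩
  have his : i + 1 < s := by omega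
  have hBi : b i + 2 ≤ b (i + 1) := by have := hbM i (i + 1) (by omega) his; omega
  have hAj : a (j + 1) + 2 ≤ a j := by have := haA j (j + 1) (by omega) hj1; omega
  have hchainR : ∀ l, i ≤ l → l < j → a l = a (l + 1) + 1 := by
    intro l hl1 hl2
    by_contra hne
    exact hmin i l hl1 (by omega) hL hne (by omega)
  have hchainL : ∀ l, i < l → l ≤ j → b (l + 1) = b l + 1 := by
    intro l hl1 hl2
    by_contra hne
    exact hmin l j hl2 hj1 hne hR (by omega)
  have hAij : a i = a j + (j - i) := by
    have key : ∀ n, n ≤ j - i → a (j - n) = a j + n := by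
      intro n
      induction n with
      | zero => simp
      | succ n ih =>
          intro h
          have h1 := ih (by omega)
          have h2 := hchainR (j - (n + 1)) (by omega) (by omega)
          rw [show j - (n + 1) + 1 = j - n from by omega] at h2
          omega
    have := key (j - i) le_rfl
    rw [show j - (j - i) = i from by omega] at this
    omega
  have hBij : b (j + 1) = b (i + 1) + (j - i) := by
    have key : ∀ n, n ≤ j - i → b (i + 1 + n) = b (i + 1) + n := by
      intro n
      induction n with
      | zero => simp
      | succ n ih =>
          intro h
          have h1 := ih (by omega)
          have h2 := hchainL (i + 1 + n) (by omega) (by omega)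
          rw [show i + 1 + n + 1 = i + 1 + (n + 1) from by omega] at h2
          omega
    have := key (j - i) le_rfl
    rw [show i + 1 + (j - i) = j + 1 from by omega] at this
    omega
  have hai1 : a (j + 1) + 2 + (j - i) ≤ a i := by omega
  -- decompose z
  have hzd : z = C (coeff (Finsupp.single 0 1) z) * X 0
      + C (coeff (Finsupp.single 1 1) z) * X 1 := homog1_decomp hz1
  have monoI : ∀ (l : Fin s) (e : Fin 2 →₀ ℕ), g l ≤ e → monomial e (1 : k) ∈ I :=
    fun l e h => MS_upclosed (show g l ∈ MS I from hgI l) h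
  have notinI : ∀ (i' : Fin s) (e : Fin 2 →₀ ℕ), e 0 < g i' 0 →
      (∀ l : Fin s, i'.val < l.val → e 1 < g l 1) → ∀ l : Fin s, ¬ g l ≤ e := by
    intro i' e h0 h1 l hle
    rcases le_or_gt l.val i'.val with h | h
    · have hWA : g i' 0 ≤ g l 0 := by
        rcases lt_or_eq_of_le h with h' | h'
        · rw [hga, hga]; exact le_of_lt (haA l.val i'.val h' i'.isLt)
        · rw [hga, hga, h']
      have := (le2.mp hle).1
      omega
    · have := h1 l h
      have := (le2.mp hle).2
      omega
  have hbweak : ∀ l : Fin s, i + 1 ≤ l.val → b (i + 1) ≤ b l.val := by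
    intro l hl
    rcases lt_or_eq_of_le hl with h' | h'
    · exact le_of_lt (hbM (i + 1) l.val h' l.isLt)
    · rw [h']
  set α := coeff (Finsupp.single 0 1) z with hα
  set β := coeff (Finsupp.single 1 1) z with hβ
  by_cases hb0 : β = 0
  · -- z = α x
    have ha0 : α ≠ 0 := by
      intro h
      apply hz0
      rw [hzd, h, hb0]
      simp
    have haipos : 1 ≤ a i := by have := haA i (i + 1) (by omega) his; omega
    have hpz : monomial (mk2 (a i - 1) (b i)) (1 : k) * z ∈ I := by
      rw [hzd, hb0, map_zero, zero_mul, add_zero]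
      rw [show monomial (mk2 (a i - 1) (b i)) (1 : k) * (C α * X 0)
        = C α * (X 0 * monomial (mk2 (a i - 1) (b i)) 1) from by ring]
      rw [X0_mul_mono, show a i - 1 + 1 = a i from by omega]
      apply Ideal.mul_mem_left
      apply monoI ⟨i, by omega⟩
      rw [le2, hga, hgb]
      simp
    have hpx := (hcz _ hpz).2
    have hco : coeff (mk2 (a i - 1) (b i + 1))
        (monomial (mk2 (a i - 1) (b i)) (1 : k) * X 1) = 1 := by
      rw [mul_comm, X1_mul_mono, coeff_monomial, if_pos rfl]
    obtain ⟨l, hle⟩ := memI _ hpx _ (mem_support_iff.mpr (by rw [hco]; exact one_ne_zero))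
    refine notinI ⟨i, by omega⟩ _ ?_ ?_ l hle
    · rw [hga]; simp; omega
    · intro l' hl'
      rw [hgb]; simp
      have := hbweak l' (by exact hl')
      omega
  · by_cases ha0 : α = 0
    · -- z = β y
      have hbj1 : 1 ≤ b (j + 1) := by have := hbM j (j + 1) (by omega) hj1; omega
      have hpz : monomial (mk2 (a (j + 1)) (b (j + 1) - 1)) (1 : k) * z ∈ I := by
        rw [hzd, ha0, map_zero, zero_mul, zero_add]
        rw [show monomial (mk2 (a (j + 1)) (b (j + 1) - 1)) (1 : k) * (C β * X 1)
          = C β * (X 1 * monomial (mk2 (a (j + 1)) (b (j + 1) - 1)) 1) from by ring]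
        rw [X1_mul_mono, show b (j + 1) - 1 + 1 = b (j + 1) from by omega]
        apply Ideal.mul_mem_left
        apply monoI ⟨j + 1, hj1⟩
        rw [le2, hga, hgb]
        simp
      have hpx := (hcz _ hpz).1
      have hco : coeff (mk2 (a (j + 1) + 1) (b (j + 1) - 1))
          (monomial (mk2 (a (j + 1)) (b (j + 1) - 1)) (1 : k) * X 0) = 1 := by
        rw [mul_comm, X0_mul_mono, coeff_monomial, if_pos rfl]
      obtain ⟨l, hle⟩ := memI _ hpx _ (mem_support_iff.mpr (by rw [hco]; exact one_ne_zero))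
      refine notinI ⟨j, by omega⟩ _ ?_ ?_ l hle
      · rw [hga]; simp; omega
      · intro l' hl'
        rw [hgb]; simp
        have : j + 1 ≤ l'.val := by exact hl'
        have hWB : b (j + 1) ≤ b l'.val := by
          rcases lt_or_eq_of_le this with h' | h'
          · exact le_of_lt (hbM (j + 1) l'.val h' l'.isLt)
          · rw [h']
        omega
    · -- main case : both nonzero
      obtain ⟨t0, ht0⟩ : ∃ t0, b (i + 1) = b i + t0 + 1 := ⟨b (i + 1) - b i - 1, by omega⟩
      have ht0pos : 1 ≤ t0 := by omega
      obtain ⟨u0, hu0⟩ : ∃ u0, u0 + 2 = a i + t0 := ⟨a i + t0 - 2, by omega⟩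
      obtain ⟨N, hN⟩ : ∃ N, u0 = a (j + 1) + N := ⟨u0 - a (j + 1), by omega⟩
      have htN : t0 + (j - i) ≤ N := by omega
      have hpz : diagPoly α β u0 (b i) N * z ∈ I := by
        rw [hzd, mul_comm, telescope α β u0 (b i) N (by omega)]
        apply sub_mem
        · apply Ideal.mul_mem_left
          apply monoI ⟨i, by omega⟩
          rw [le2, hga, hgb]
          simp
          omega
        · apply Ideal.mul_mem_left
          apply monoI ⟨j + 1, hj1⟩
          rw [le2, hga, hgb]
          simp
          omega
      have hpx := (hcz _ hpz).1
      have hco : coeff (mk2 (u0 + 1 - t0) (b i + t0))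
          (diagPoly α β u0 (b i) N * X 0) = (-β) ^ t0 * α ^ (N - t0) := by
        rw [coeff_mul_X0 _ _ _ (by omega : 1 ≤ u0 + 1 - t0),
          show u0 + 1 - t0 - 1 = u0 - t0 from by omega]
        exact coeff_diagPoly α β u0 (b i) N t0 (by omega)
      have hne0 : ((-β) ^ t0 * α ^ (N - t0) : k) ≠ 0 :=
        mul_ne_zero (pow_ne_zero _ (neg_ne_zero.mpr hb0)) (pow_ne_zero _ ha0)
      obtain ⟨l, hle⟩ := memI _ hpx _ (mem_support_iff.mpr (by rw [hco]; exact hne0))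
      refine notinI ⟨i, by omega⟩ _ ?_ ?_ l hle
      · rw [hga]; simp; omega
      · intro l' hl'
        rw [hgb]; simp
        have := hbweak l' (by exact hl')
        omega

end LQO



end LQOAux

theorem linear_quotients_order {k : Type*} [Field k] [Infinite k]
    (I : Ideal (MvPolynomial (Fin 2) k))
    (hI0 : I ≠ ⊥) (hItop : I ≠ ⊤)
    (hmon : IsMonomialIdeal I) (hfull : IsFull I) :
    ∃ (s : ℕ) (f : Fin s → MvPolynomial (Fin 2) k),
      Function.Injective f ∧
      Set.range f = minimalMonomialGens I ∧
      (∀ i j : Fin s, i ≤ j → (f i).totalDegree ≤ (f j).totalDegree) ∧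
      ∀ j : ℕ, ∀ hj : j + 1 < s,
        ∃ i : Fin 2,
          Submodule.colon (Ideal.span (f '' {l : Fin s | l.val ≤ j}))
              (Ideal.span {f ⟨j + 1, hj⟩}) =
            Ideal.span {X i} := by
  classical
  have hspan : I = Ideal.span ((fun a => monomial a (1 : k)) '' LQO.GS I) :=
    LQO.span_GS hmon
  have hfin : (LQO.GS I).Finite := LQO.GS_finite
  set Gf : Finset (Fin 2 →₀ ℕ) := hfin.toFinset with hGfdef
  have hGfc : ↑Gf = LQO.GS I := hfin.coe_toFinset
  set s := Gf.card with hs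
  let e0 : {x // x ∈ Gf} ≃ Fin s := Gf.equivFin
  let g0 : Fin s → (Fin 2 →₀ ℕ) := fun i => (e0.symm i : Fin 2 →₀ ℕ)
  have g0mem : ∀ i, g0 i ∈ LQO.GS I := by
    intro i
    rw [← hGfc]
    exact (e0.symm i).2
  have g0inj : Function.Injective g0 := fun i j h => e0.symm.injective (Subtype.ext h)
  have g0surj : ∀ u ∈ LQO.GS I, ∃ i, g0 i = u := by
    intro u hu
    refine ⟨e0 ⟨u, by rw [← hGfc] at hu; exact hu⟩, ?_⟩
    simp only [g0, Equiv.symm_apply_apply]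
  let σ0 : Equiv.Perm (Fin s) := Tuple.sort (fun i => OrderDual.toDual (g0 i 0))
  let g : Fin s → (Fin 2 →₀ ℕ) := fun i => g0 (σ0 i)
  have gmem : ∀ i, g i ∈ LQO.GS I := fun i => g0mem _
  have gInj : Function.Injective g := g0inj.comp σ0.injective
  have gsurj : ∀ u ∈ LQO.GS I, ∃ i, g i = u := by
    intro u hu
    obtain ⟨i, hi⟩ := g0surj u hu
    exact ⟨σ0.symm i, by simp only [g, Equiv.apply_symm_apply, hi]⟩
  have gAnti : ∀ {i j : Fin s}, i < j → g j 0 < g i 0 := by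
    intro i j hij
    have hm := Tuple.monotone_sort (fun i => OrderDual.toDual (g0 i 0)) hij.le
    have hle : g j 0 ≤ g i 0 := hm
    rcases lt_or_eq_of_le hle with h | h
    · exact h
    · exact absurd (gInj (LQO.GS_coord0_inj (gmem j) (gmem i) h)) (Fin.ne_of_gt hij)
  have gbMono : ∀ {i j : Fin s}, i < j → g i 1 < g j 1 := by
    intro i j hij
    by_contra h
    push_neg at h
    have hle : g j ≤ g i := LQO.le2.mpr ⟨le_of_lt (gAnti hij), h⟩
    have := (gmem i).2 (g j) (gmem j).1 hle
    exact absurd (gInj this) (Fin.ne_of_gt hij)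
  have spos : 0 < s := by
    by_contra hs0
    push_neg at hs0
    have hGfe : Gf = ∅ := Finset.card_eq_zero.mp (by omega)
    have hGSe : LQO.GS I = ∅ := by rw [← hGfc, hGfe]; simp
    apply hI0
    rw [hspan, hGSe]
    simp
  haveI : NeZero s := ⟨by omega⟩
  let a : ℕ → ℕ := fun n => if h : n < s then g ⟨n, h⟩ 0 else 0
  let b : ℕ → ℕ := fun n => if h : n < s then g ⟨n, h⟩ 1 else 0
  have hga : ∀ l : Fin s, g l 0 = a l.val := by
    intro l
    simp only [a, dif_pos l.isLt, Fin.eta]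
  have hgb : ∀ l : Fin s, g l 1 = b l.val := by
    intro l
    simp only [b, dif_pos l.isLt, Fin.eta]
  have haA : ∀ m n : ℕ, m < n → n < s → a n < a m := by
    intro m n h hn
    have h2 : m < s := by omega
    have := gAnti (i := ⟨m, h2⟩) (j := ⟨n, hn⟩) (by simpa [Fin.mk_lt_mk] using h)
    rw [hga, hga] at this
    exact this
  have hbM : ∀ m n : ℕ, m < n → n < s → b m < b n := by
    intro m n h hn
    have h2 : m < s := by omega
    have := gbMono (i := ⟨m, h2⟩) (j := ⟨n, hn⟩) (by simpa [Fin.mk_lt_mk] using h)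
    rw [hgb, hgb] at this
    exact this
  have haWA : ∀ m n : ℕ, m ≤ n → n < s → a n ≤ a m := by
    intro m n h hn
    rcases lt_or_eq_of_le h with h' | h'
    · exact le_of_lt (haA m n h' hn)
    · rw [h']
  have hbWM : ∀ m n : ℕ, m ≤ n → n < s → b m ≤ b n := by
    intro m n h hn
    rcases lt_or_eq_of_le h with h' | h'
    · exact le_of_lt (hbM m n h' hn)
    · rw [h']
  have memI : ∀ p : MvPolynomial (Fin 2) k, p ∈ I ↔ ∀ e ∈ p.support, ∃ l : Fin s, g l ≤ e := by
    intro p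
    constructor
    · intro hp e he
      rw [hspan] at hp
      obtain ⟨si, hsi, hle⟩ := mem_ideal_span_monomial_image.mp hp e he
      obtain ⟨l, rfl⟩ := gsurj si hsi
      exact ⟨l, hle⟩
    · intro h
      rw [hspan]
      refine mem_ideal_span_monomial_image.mpr fun e he => ?_
      obtain ⟨l, hl⟩ := h e he
      exact ⟨g l, gmem l, hl⟩
  have hgI : ∀ l : Fin s, monomial (g l) (1 : k) ∈ I := fun l => (gmem l).1
  have Hpair := LQO.pair_of_full g a b hga hgb haA hbM hgI
    (fun p hp => (memI p).mp hp) hfull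
  have hm0ex : ∃ m0, m0 < s ∧ (∀ l, l < m0 → l + 1 < s → b (l + 1) = b l + 1) ∧
      (∀ l, m0 ≤ l → l + 1 < s → a l = a (l + 1) + 1) := by
    by_cases hall : ∀ l, l + 1 < s → b (l + 1) = b l + 1
    · exact ⟨s - 1, by omega, fun l h1 h2 => hall l h2, fun l h1 h2 => by omega⟩
    · push_neg at hall
      obtain ⟨l0, hl01, hl02⟩ := hall
      have hex : ∃ l, l + 1 < s ∧ b (l + 1) ≠ b l + 1 := ⟨l0, hl01, hl02⟩
      refine ⟨Nat.find hex, by have := (Nat.find_spec hex).1; omega, ?_, ?_⟩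
      · intro l hl h2
        by_contra hne
        exact Nat.find_min hex hl ⟨h2, hne⟩
      · intro l hl h2
        rcases Hpair (Nat.find hex) l hl h2 with h | h
        · exact absurd h (Nat.find_spec hex).2
        · exact h
  obtain ⟨m0, hm0s, hLft, hRgt⟩ := hm0ex
  let d : ℕ → ℕ := fun n => a n + b n
  have dstepR : ∀ l, m0 ≤ l → l + 1 < s → d l ≤ d (l + 1) := by
    intro l h1 h2
    have ha := hRgt l h1 h2
    have hb := hbM l (l + 1) (by omega) h2
    simp only [d]
    omega
  have dstepL : ∀ l, l + 1 ≤ m0 → d (l + 1) ≤ d l := by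
    intro l h1
    have hb := hLft l (by omega) (by omega)
    have ha := haA l (l + 1) (by omega) (by omega)
    simp only [d]
    omega
  have dmonR : ∀ u v, m0 ≤ u → u ≤ v → v < s → d u ≤ d v := by
    intro u v h1 h2 h3
    induction v, h2 using Nat.le_induction with
    | base => exact le_rfl
    | succ v hyp ih => exact (ih (by omega)).trans (dstepR v (by omega) h3)
  have dmonL : ∀ u v, u ≤ v → v ≤ m0 → d v ≤ d u := by
    intro u v h2 h3
    induction v, h2 using Nat.le_induction with
    | base => exact le_rfl
    | succ v hyp ih => exact (dstepL v (by omega)).trans (ih (by omega))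
  have dvalley : ∀ n, n < s → d m0 ≤ d n := by
    intro n hn
    rcases le_total m0 n with h | h
    · exact dmonR m0 n le_rfl h hn
    · exact dmonL n m0 h le_rfl
  let κ : Fin s → ℕ ×ₗ (ℕ ×ₗ ℕ) := fun t =>
    toLex (d t.val, toLex ((if t.val < m0 then 1 else 0), (if t.val < m0 then m0 - t.val else t.val - m0)))
  have hval : ∀ u : Fin s, (if (ofLex (ofLex (κ u)).2).1 = 1 then m0 - (ofLex (ofLex (κ u)).2).2
      else m0 + (ofLex (ofLex (κ u)).2).2) = u.val := by
    intro u
    by_cases hu : u.val < m0 <;> simp [κ, hu] <;> omega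
  have κinj : Function.Injective κ := by
    intro u t h
    apply Fin.ext
    rw [← hval u, ← hval t, h]
  let σ : Equiv.Perm (Fin s) := Tuple.sort κ
  have hmono : Monotone (κ ∘ σ) := Tuple.monotone_sort κ
  have hsm : StrictMono (κ ∘ σ) := hmono.strictMono_of_injective (κinj.comp σ.injective)
  let f : Fin s → MvPolynomial (Fin 2) k := fun l => monomial (g (σ l)) 1
  have κmin : ∀ u : Fin s, u.val ≠ m0 → κ ⟨m0, hm0s⟩ < κ u := by
    intro u hu
    have hd : d m0 ≤ d u.val := dvalley u.val u.isLt
    rcases lt_or_eq_of_le hd with h | h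
    · exact (Prod.Lex.lt_iff).mpr (Or.inl h)
    · refine (Prod.Lex.lt_iff).mpr (Or.inr ⟨h, (Prod.Lex.lt_iff).mpr ?_⟩)
      rcases lt_or_ge u.val m0 with h2 | h2
      · left; simp [κ, h2]
      · right
        constructor
        · simp [κ, not_lt.mpr h2]
        · simp [κ, not_lt.mpr h2]
          omega
  have hσ0 : σ 0 = ⟨m0, hm0s⟩ := by
    by_contra hne
    have h1 : κ ⟨m0, hm0s⟩ < κ (σ 0) := κmin (σ 0) (fun h => hne (Fin.ext h))
    have h2 : (κ ∘ σ) 0 ≤ (κ ∘ σ) (σ.symm ⟨m0, hm0s⟩) := hmono (Fin.zero_le _)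
    simp only [Function.comp_apply, Equiv.apply_symm_apply] at h2
    exact absurd (h1.trans_le h2) (lt_irrefl _)
  refine ⟨s, f, ?_, ?_, ?_, ?_⟩
  · intro l1 l2 h
    exact σ.injective (gInj (monomial_left_injective one_ne_zero h))
  · have h1 : Set.range f = (fun e => monomial e (1 : k)) '' Set.range (fun l => g (σ l)) := by
      rw [← Set.range_comp]
      rfl
    rw [h1]
    have h2 : Set.range (fun l => g (σ l)) = LQO.GS I := by
      apply Set.eq_of_subset_of_subset
      · rintro u ⟨l, rfl⟩
        exact gmem _
      · intro u hu
        obtain ⟨i, hi⟩ := gsurj u hu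
        exact ⟨σ.symm i, by simp only [Equiv.apply_symm_apply, hi]⟩
    rw [h2]
    rfl
  · intro i j hij
    have h1 : ∀ l : Fin s, (f l).totalDegree = d (σ l).val := by
      intro l
      rw [show f l = monomial (g (σ l)) 1 from rfl, totalDegree_monomial _ one_ne_zero]
      have : (g (σ l)).sum (fun _ e => e) = (g (σ l)).degree := rfl
      rw [this, LQO.degree2, hga, hgb]
    rw [h1 i, h1 j]
    have := hmono hij
    rcases (Prod.Lex.le_iff).mp this with h | h
    · exact le_of_lt h
    · exact le_of_eq h.1
  · intro j hj
    set t : Fin s := σ ⟨j + 1, hj⟩ with htdef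
    have htm0 : t.val ≠ m0 := by
      intro h
      have h1 : t = ⟨m0, hm0s⟩ := Fin.ext h
      have h2 : σ ⟨j + 1, hj⟩ = σ 0 := by rw [← htdef, h1, hσ0]
      have h3 := σ.injective h2
      have h4 := congrArg Fin.val h3
      simp at h4
    have him : f '' {l : Fin s | l.val ≤ j} =
        (fun e => monomial e (1 : k)) '' ((fun l => g (σ l)) '' {l : Fin s | l.val ≤ j}) := by
      rw [Set.image_image]
    have hprev : ∀ l : Fin s, l.val ≤ j → κ (σ l) < κ t := by
      intro l hl
      exact hsm (show l < ⟨j + 1, hj⟩ from by rw [Fin.lt_def]; simp; omega)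
    have hprev_ne : ∀ l : Fin s, l.val ≤ j → (σ l).val ≠ t.val := by
      intro l hl h
      have := σ.injective (Fin.ext h : σ l = t)
      have := congrArg Fin.val this
      simp at this
      omega
    rcases lt_trichotomy t.val m0 with hcase | hcase | hcase
    · -- left extension : colon is (y)
      refine ⟨1, ?_⟩
      rw [him]
      have htps : t.val + 1 < s := by omega
      have hκtp : κ ⟨t.val + 1, htps⟩ < κ t := by
        rcases lt_or_eq_of_le (show t.val + 1 ≤ m0 from by omega) with h2 | h2
        · have hdle : d (t.val + 1) ≤ d t.val := dstepL t.val (by omega)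
          refine (Prod.Lex.lt_iff).mpr ?_
          rcases lt_or_eq_of_le hdle with h3 | h3
          · exact Or.inl h3
          · refine Or.inr ⟨h3, (Prod.Lex.lt_iff).mpr (Or.inr ⟨?_, ?_⟩)⟩
            · simp [κ, h2, hcase]
            · simp [κ, h2, hcase]
              omega
        · have h3 : (⟨t.val + 1, htps⟩ : Fin s) = ⟨m0, hm0s⟩ := Fin.ext h2
          rw [h3]
          exact κmin t htm0
      have htpP : (σ.symm ⟨t.val + 1, htps⟩).val ≤ j := by
        have h4 : σ.symm ⟨t.val + 1, htps⟩ < (⟨j + 1, hj⟩ : Fin s) := by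
          apply hsm.lt_iff_lt.mp
          show κ (σ (σ.symm _)) < κ (σ ⟨j + 1, hj⟩)
          rw [Equiv.apply_symm_apply]
          exact hκtp
        rw [Fin.lt_def] at h4
        simp at h4
        omega
      have hgt1 : g t 1 = b t.val := hgb t
      refine LQO.colon_step (fun l => g (σ l)) {l : Fin s | l.val ≤ j} ⟨j + 1, hj⟩
        (σ.symm ⟨t.val + 1, htps⟩) 1 htpP ?_ ?_
      · show g (σ (σ.symm _)) ≤ g (σ ⟨j + 1, hj⟩) + Finsupp.single 1 1
        rw [Equiv.apply_symm_apply]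
        rw [show g (σ ⟨j + 1, hj⟩) = g t from rfl]
        rw [LQO.le2]
        constructor
        · have h5 : g ⟨t.val + 1, htps⟩ 0 < g t 0 := gAnti (by rw [Fin.lt_def]; simp)
          have h6 : (g t + Finsupp.single 1 1 : Fin 2 →₀ ℕ) 0 = g t 0 := by
            simp [Finsupp.single_apply]
          omega
        · have h5 : g ⟨t.val + 1, htps⟩ 1 = b t.val + 1 := by
            rw [hgb]
            show b (t.val+1) = b t.val + 1
            exact hLft t.val hcase htps
          have h6 : (g t + Finsupp.single 1 1 : Fin 2 →₀ ℕ) 1 = g t 1 + 1 := by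
            simp [Finsupp.single_apply]
          omega
      · intro l hl
        show g t 1 + 1 ≤ g (σ l) 1
        have hl' : l.val ≤ j := hl
        have hut : t.val < (σ l).val := by
          by_contra hnot
          push_neg at hnot
          have hne := hprev_ne l hl'
          have hlt : (σ l).val < t.val := by omega
          have hκ := hprev l hl'
          have hd : d t.val ≤ d (σ l).val := dmonL (σ l).val t.val (by omega) (by omega)
          rcases (Prod.Lex.lt_iff).mp hκ with h5 | ⟨h5, h6⟩
          · simp only [κ, ofLex_toLex] at h5; omega
          · rcases (Prod.Lex.lt_iff).mp h6 with h7 | ⟨h7, h8⟩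
            · simp [κ, show (σ l).val < m0 from by omega, hcase] at h7
            · simp [κ, show (σ l).val < m0 from by omega, hcase] at h8
              omega
        have h5 : b (t.val + 1) ≤ b (σ l).val := hbWM _ _ (by omega) (σ l).isLt
        have h6 := hLft t.val hcase htps
        rw [hgb, hgb]
        omega
    · exact absurd hcase htm0
    · -- right extension : colon is (x)
      refine ⟨0, ?_⟩
      rw [him]
      have htms : t.val - 1 < s := by omega
      have hκtm : κ ⟨t.val - 1, htms⟩ < κ t := by
        rcases lt_or_eq_of_le (show m0 ≤ t.val - 1 from by omega) with h2 | h2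
        · have hdle : d (t.val - 1) ≤ d t.val := by
            have := dstepR (t.val - 1) (by omega) (by omega)
            rw [show t.val - 1 + 1 = t.val from by omega] at this
            exact this
          refine (Prod.Lex.lt_iff).mpr ?_
          rcases lt_or_eq_of_le hdle with h3 | h3
          · exact Or.inl h3
          · refine Or.inr ⟨h3, (Prod.Lex.lt_iff).mpr (Or.inr ⟨?_, ?_⟩)⟩
            · simp [κ, show ¬ (t.val - 1 < m0) from by omega, show ¬ (t.val < m0) from by omega]
            · simp [κ, show ¬ (t.val - 1 < m0) from by omega, show ¬ (t.val < m0) from by omega]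
              omega
        · have h3 : (⟨t.val - 1, htms⟩ : Fin s) = ⟨m0, hm0s⟩ := Fin.ext h2.symm
          rw [h3]
          exact κmin t htm0
      have htmP : (σ.symm ⟨t.val - 1, htms⟩).val ≤ j := by
        have h4 : σ.symm ⟨t.val - 1, htms⟩ < (⟨j + 1, hj⟩ : Fin s) := by
          apply hsm.lt_iff_lt.mp
          show κ (σ (σ.symm _)) < κ (σ ⟨j + 1, hj⟩)
          rw [Equiv.apply_symm_apply]
          exact hκtm
        rw [Fin.lt_def] at h4
        simp at h4
        omega
      refine LQO.colon_step (fun l => g (σ l)) {l : Fin s | l.val ≤ j} ⟨j + 1, hj⟩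
        (σ.symm ⟨t.val - 1, htms⟩) 0 htmP ?_ ?_
      · show g (σ (σ.symm _)) ≤ g (σ ⟨j + 1, hj⟩) + Finsupp.single 0 1
        rw [Equiv.apply_symm_apply]
        rw [show g (σ ⟨j + 1, hj⟩) = g t from rfl]
        rw [LQO.le2]
        constructor
        · have h5 : g ⟨t.val - 1, htms⟩ 0 = a t.val + 1 := by
            rw [hga]
            show a (t.val - 1) = a t.val + 1
            have := hRgt (t.val - 1) (by omega) (by omega)
            rw [show t.val - 1 + 1 = t.val from by omega] at this
            omega
          have h6 : (g t + Finsupp.single 0 1 : Fin 2 →₀ ℕ) 0 = g t 0 + 1 := by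
            simp [Finsupp.single_apply]
          have h8 := hga t
          omega
        · have h5 : g ⟨t.val - 1, htms⟩ 1 < g t 1 := gbMono (Fin.lt_def.mpr (by show t.val - 1 < t.val; omega))
          have h6 : (g t + Finsupp.single 0 1 : Fin 2 →₀ ℕ) 1 = g t 1 := by
            simp [Finsupp.single_apply]
          omega
      · intro l hl
        show g t 0 + 1 ≤ g (σ l) 0
        have hl' : l.val ≤ j := hl
        have hut : (σ l).val < t.val := by
          by_contra hnot
          push_neg at hnot
          have hne := hprev_ne l hl'
          have hlt : t.val < (σ l).val := by omega
          have hκ := hprev l hl'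
          have hd : d t.val ≤ d (σ l).val := dmonR t.val (σ l).val (by omega) (by omega) (σ l).isLt
          rcases (Prod.Lex.lt_iff).mp hκ with h5 | ⟨h5, h6⟩
          · simp only [κ, ofLex_toLex] at h5; omega
          · rcases (Prod.Lex.lt_iff).mp h6 with h7 | ⟨h7, h8⟩
            · simp [κ, show ¬ ((σ l).val < m0) from by omega, show ¬ (t.val < m0) from by omega] at h7
            · simp [κ, show ¬ ((σ l).val < m0) from by omega, show ¬ (t.val < m0) from by omega] at h8
              omega
        have h5 : a (t.val - 1) ≤ a (σ l).val := haWA _ _ (by omega) (by omega)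
        have h6 : a (t.val - 1) = a t.val + 1 := by
          have := hRgt (t.val - 1) (by omega) (by omega)
          rw [show t.val - 1 + 1 = t.val from by omega] at this
          exact this
        rw [hga, hga]
        omega
      


end
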